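/- Let f : ℝ → ℝ be C¹ and suppose there exists θ ∈ (0,1) such that 0 < f(u)/u ≤ θ·f'(u) for every u ≠ 0. Then with F(u) = ∫₀ᵘ f(s) ds, one has 0 < F(u) ≤ (θ/(1+θ))·f(u)·u for every u ≠ 0, and θ/(1+θ) < 1/2. -/

import Mathlib

theorem stmt_7 (f : ℝ → ℝ) (hf : ContDiff ℝ 1 f) (hf0 : f 0 = 0)
    (θ : ℝ) (hθ : θ ∈ Set.Ioo (0:ℝ) 1)
    (hcond : ∀ u : ℝ, u ≠ 0 → 0 < f u / u ∧ f u / u ≤ θ * deriv f u)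
    (F : ℝ → ℝ) (hF : ∀ u, F u = ∫ s in (0:ℝ)..u, f s) :
    (∀ u : ℝ, u ≠ 0 → 0 < F u ∧ F u ≤ (θ / (1 + θ)) * (f u * u)) ∧
      θ / (1 + θ) < 1 / 2 := by
  obtain ⟨hθ0, hθ1⟩ := hθ
  have h1θ : (0:ℝ) < 1 + θ := by linarith
  have hfd : Differentiable ℝ f := hf.differentiable one_ne_zero
  have hfc : Continuous f := hfd.continuous
  have hFderiv : ∀ u : ℝ, HasDerivAt F (f u) u := by
    intro u
    have h := intervalIntegral.integral_hasStrictDerivAt_right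
      (hfc.intervalIntegrable 0 u) (hfc.stronglyMeasurableAtFilter _ _) hfc.continuousAt
    have : HasDerivAt (fun x => ∫ s in (0:ℝ)..x, f s) (f u) u := h.hasDerivAt
    refine this.congr_of_eventuallyEq ?_
    filter_upwards with x using (hF x)
  set G : ℝ → ℝ := fun u => θ * (u * f u) - (1 + θ) * F u with hG
  have hGd : ∀ u : ℝ, HasDerivAt G (θ * (f u + u * deriv f u) - (1 + θ) * f u) u := by
    intro u
    have h1 : HasDerivAt (fun x : ℝ => x * f x) (1 * f u + u * deriv f u) u :=
      (hasDerivAt_id u).mul (hfd u).hasDerivAt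
    have := ((h1.const_mul θ).sub ((hFderiv u).const_mul (1 + θ)))
    simp only [one_mul, mul_add] at this; rw [mul_add]; exact this
  have hG0 : G 0 = 0 := by
    simp [hG, hF 0, hf0]
  -- positivity / negativity of f
  have hfpos : ∀ s : ℝ, 0 < s → 0 < f s := by
    intro s hs
    have h := (hcond s hs.ne').1
    have : f s = (f s / s) * s := (div_mul_cancel₀ (f s) hs.ne').symm
    rw [this]; exact mul_pos h hs
  have hfneg : ∀ s : ℝ, s < 0 → f s < 0 := by
    intro s hs
    have h := (hcond s hs.ne).1
    have : f s = (f s / s) * s := (div_mul_cancel₀ (f s) hs.ne).symm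
    rw [this]; exact mul_neg_of_pos_of_neg h hs
  -- G ≥ 0
  have hGnonneg : ∀ u : ℝ, u ≠ 0 → 0 ≤ G u := by
    intro u hu
    rcases lt_or_gt_of_ne hu with hneg | hpos
    · -- antitone on [u, 0]
      have hanti : AntitoneOn G (Set.Icc u 0) := by
        apply antitoneOn_of_deriv_nonpos (convex_Icc u 0)
        · exact (Differentiable.continuous (fun x => ((hGd x).differentiableAt))).continuousOn
        · intro x hx
          exact ((hGd x).differentiableAt).differentiableWithinAt
        · intro x hx
          rw [interior_Icc] at hx
          rw [(hGd x).deriv]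
          have hx0 : x < 0 := hx.2
          have h := (hcond x hx0.ne).2
          have : θ * deriv f x * x ≤ f x := by
            rw [div_le_iff_of_neg hx0] at h
            linarith
          nlinarith
      have := hanti ⟨le_refl u, hneg.le⟩ ⟨hneg.le, le_refl (0:ℝ)⟩ hneg.le
      rw [hG0] at this; exact this
    · have hmono : MonotoneOn G (Set.Icc 0 u) := by
        apply monotoneOn_of_deriv_nonneg (convex_Icc 0 u)
        · exact (Differentiable.continuous (fun x => ((hGd x).differentiableAt))).continuousOn
        · intro x hx
          exact ((hGd x).differentiableAt).differentiableWithinAt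
        · intro x hx
          rw [interior_Icc] at hx
          rw [(hGd x).deriv]
          have hx0 : 0 < x := hx.1
          have h := (hcond x hx0.ne').2
          have : f x ≤ θ * deriv f x * x := by
            rw [div_le_iff₀ hx0] at h
            linarith
          nlinarith
      have := hmono ⟨le_refl (0:ℝ), hpos.le⟩ ⟨hpos.le, le_refl u⟩ hpos.le
      rw [hG0] at this; exact this
  constructor
  · intro u hu
    constructor
    · rcases lt_or_gt_of_ne hu with hneg | hpos
      · have h : 0 < ∫ s in u..(0:ℝ), -f s := by
          apply intervalIntegral.intervalIntegral_pos_of_pos_on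
          · exact (hfc.neg.intervalIntegrable u 0)
          · intro x hx
            simpa using hfneg x hx.2
          · exact hneg
        rw [intervalIntegral.integral_neg] at h
        have heq : (∫ s in (0:ℝ)..u, f s) = -∫ s in u..(0:ℝ), f s :=
          intervalIntegral.integral_symm u 0
        rw [hF u]
        linarith
      · rw [hF u]
        apply intervalIntegral.intervalIntegral_pos_of_pos_on
        · exact hfc.intervalIntegrable 0 u
        · intro x hx; exact hfpos x hx.1
        · exact hpos
    · have h := hGnonneg u hu
      rw [hG] at h
      simp only at h
      rw [div_mul_eq_mul_div, le_div_iff₀ h1θ]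
      nlinarith
  · rw [div_lt_div_iff₀ h1θ (by norm_num : (0:ℝ) < 2)]
    linarith
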